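/- Let a < b be real numbers and let K : [a,b] × [a,b] → ℝ be a continuous symmetric function with K(s,t) > 0 for all s, t ∈ [a,b]. Then the following are equivalent: (i) K(s,t)·K(u,u) = K(s,u)·K(u,t) for all a ≤ s ≤ u ≤ t ≤ b; (ii) there exist continuous functions f, g : [a,b] → ℝ such that K(s,t) = f(s)·g(t) for all a ≤ s ≤ t ≤ b. -/

import Mathlib

/-- **Factorization of positive continuous kernels satisfying the Markov functional equation.**
Let `K` be a continuous symmetric positive kernel on `[a,b] × [a,b]`. Then `K` satisfies the
Markov functional equation `K(s,t) K(u,u) = K(s,u) K(u,t)` for all `a ≤ s ≤ u ≤ t ≤ b` if and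
only if there are continuous functions `f, g : [a,b] → ℝ` with `K(s,t) = f(s) g(t)` on the
upper triangle `s ≤ t`. -/
theorem markov_kernel_iff_separable
    (a b : ℝ) (hab : a < b) (K : ℝ → ℝ → ℝ)
    (hcont : ContinuousOn (fun q : ℝ × ℝ => K q.1 q.2) (Set.Icc a b ×ˢ Set.Icc a b))
    (hsymm : ∀ s ∈ Set.Icc a b, ∀ t ∈ Set.Icc a b, K s t = K t s)
    (hpos : ∀ s ∈ Set.Icc a b, ∀ t ∈ Set.Icc a b, 0 < K s t) :
    (∀ s ∈ Set.Icc a b, ∀ u ∈ Set.Icc a b, ∀ t ∈ Set.Icc a b,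
        s ≤ u → u ≤ t → K s t * K u u = K s u * K u t)
      ↔ (∃ f g : ℝ → ℝ, ContinuousOn f (Set.Icc a b) ∧ ContinuousOn g (Set.Icc a b) ∧
          ∀ s ∈ Set.Icc a b, ∀ t ∈ Set.Icc a b, s ≤ t → K s t = f s * g t) := by
  have ha : a ∈ Set.Icc a b := ⟨le_refl a, hab.le⟩
  constructor
  · intro hM
    refine ⟨fun s => K s s / K a s, fun t => K a t, ?_, ?_, ?_⟩
    · apply ContinuousOn.div
      · exact hcont.comp (continuousOn_id.prodMk continuousOn_id)
          (fun x hx => Set.mk_mem_prod hx hx)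
      · exact hcont.comp (continuousOn_const.prodMk continuousOn_id)
          (fun x hx => Set.mk_mem_prod ha hx)
      · intro x hx; exact (hpos a ha x hx).ne'
    · exact hcont.comp (continuousOn_const.prodMk continuousOn_id)
        (fun x hx => Set.mk_mem_prod ha hx)
    · intro s hs t ht hst
      have h := hM a ha s hs t ht hs.1 hst
      have hKas : K a s ≠ 0 := (hpos a ha s hs).ne'
      field_simp
      linarith [h]
  · rintro ⟨f, g, hf, hg, hfg⟩ s hs u hu t ht hsu hut
    rw [hfg s hs t ht (hsu.trans hut), hfg u hu u hu le_rfl,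
        hfg s hs u hu hsu, hfg u hu t ht hut]
    ring
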